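/- Structural error recursion for sub-sampled Newton on a convex set: Let F : ℝᵖ → ℝ be twice continuously differentiable on an open convex set D containing a convex set X, with minimizer x* of F over X. Assume the Hessian of F is L-Lipschitz on the segment between any iterate and x* (in spectral norm), and let H be a symmetric matrix with λ_min(H) = μ > 0. If x⁺ = argmin over X of ⟨∇F(x), z − x⟩ + ½(z − x)ᵀ H (z − x), then ‖x⁺ − x*‖ ≤ (‖H − ∇²F(x)‖/μ)·‖x − x*‖ + (L/(2μ))·‖x − x*‖². -/

import Mathlib

open scoped RealInnerProductSpace

/-- Structural error recursion for sub-sampled Newton on a convex set. -/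
theorem structural_error_recursion {p : ℕ}
    (D X : Set (EuclideanSpace ℝ (Fin p)))
    (hD : IsOpen D) (hDconv : Convex ℝ D) (hXconv : Convex ℝ X) (hXD : X ⊆ D)
    (F : EuclideanSpace ℝ (Fin p) → ℝ)
    (gradF : EuclideanSpace ℝ (Fin p) → EuclideanSpace ℝ (Fin p))
    (hessF : EuclideanSpace ℝ (Fin p) →
      (EuclideanSpace ℝ (Fin p) →L[ℝ] EuclideanSpace ℝ (Fin p)))
    (hgrad : ∀ u ∈ D, HasGradientAt F (gradF u) u)
    (hhess : ∀ u ∈ D, HasFDerivAt gradF (hessF u) u)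
    (hhessCont : ContinuousOn hessF D)
    (xstar x xplus : EuclideanSpace ℝ (Fin p))
    (hxstarX : xstar ∈ X) (hxX : x ∈ X) (hxplusX : xplus ∈ X)
    (hmin : ∀ z ∈ X, F xstar ≤ F z)
    (L μ : ℝ) (hL : 0 ≤ L) (hμ : 0 < μ)
    (hlip : ∀ u ∈ segment ℝ xstar x, ∀ v ∈ segment ℝ xstar x,
      ‖hessF u - hessF v‖ ≤ L * ‖u - v‖)
    (H : EuclideanSpace ℝ (Fin p) →L[ℝ] EuclideanSpace ℝ (Fin p))
    (hHsym : ∀ u v, ⟪H u, v⟫ = ⟪u, H v⟫)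
    (hHmin : ∀ v, μ * ‖v‖ ^ 2 ≤ ⟪v, H v⟫)
    (hVIstar : ∀ z ∈ X, 0 ≤ ⟪gradF xstar, z - xstar⟫)
    (hVI : ∀ z ∈ X, 0 ≤ ⟪gradF x + H (xplus - x), z - xplus⟫) :
    ‖xplus - xstar‖ ≤
      (‖H - hessF x‖ / μ) * ‖x - xstar‖ + (L / (2 * μ)) * ‖x - xstar‖ ^ 2 := by
  set e : EuclideanSpace ℝ (Fin p) := x - xstar with he
  set d : EuclideanSpace ℝ (Fin p) := xplus - xstar with hd
  -- segment is inside X and D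
  have hsegX : segment ℝ xstar x ⊆ X := hXconv.segment_subset hxstarX hxX
  have hsegD : segment ℝ xstar x ⊆ D := fun u hu => hXD (hsegX hu)
  -- the path c t = xstar + t • e
  set c : ℝ → EuclideanSpace ℝ (Fin p) := fun t => xstar + t • e with hc
  have hcseg : ∀ t ∈ Set.Icc (0:ℝ) 1, c t ∈ segment ℝ xstar x := by
    intro t ht
    rw [segment_eq_image']
    exact ⟨t, ht, rfl⟩
  have hcD : ∀ t ∈ Set.Icc (0:ℝ) 1, c t ∈ D := fun t ht => hsegD (hcseg t ht)
  -- derivative of gradF ∘ c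
  have hderiv : ∀ t ∈ Set.Icc (0:ℝ) 1,
      HasDerivAt (fun s => gradF (c s)) (hessF (c t) e) t := by
    intro t ht
    have h1 : HasDerivAt c e t := by
      have : HasDerivAt (fun s : ℝ => s • e) ((1:ℝ) • e) t :=
        (hasDerivAt_id t).smul_const e
      simpa [hc, one_smul] using this.const_add xstar
    exact (hhess (c t) (hcD t ht)).comp_hasDerivAt t h1
  -- continuity of the integrand
  have hcont : ContinuousOn (fun t => hessF (c t) e) (Set.Icc (0:ℝ) 1) := by
    have hcc : ContinuousOn c (Set.Icc (0:ℝ) 1) :=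
      (continuous_const.add (continuous_id.smul continuous_const)).continuousOn
    exact (hhessCont.comp hcc hcD).clm_apply continuousOn_const
  have hInt : IntervalIntegrable (fun t => hessF (c t) e)
      MeasureTheory.volume 0 1 := by
    apply ContinuousOn.intervalIntegrable
    rwa [Set.uIcc_of_le (by norm_num : (0:ℝ) ≤ 1)]
  -- FTC
  have hFTC : (∫ t in (0:ℝ)..1, hessF (c t) e) = gradF x - gradF xstar := by
    have := intervalIntegral.integral_eq_sub_of_hasDerivAt
      (f := fun s => gradF (c s)) (f' := fun t => hessF (c t) e)
      (by
        intro t ht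
        rw [Set.uIcc_of_le (by norm_num : (0:ℝ) ≤ 1)] at ht
        exact hderiv t ht) hInt
    have h0 : c 0 = xstar := by simp [hc]
    have h1 : c 1 = x := by simp [hc, he]
    simpa [h0, h1] using this
  -- Taylor remainder bound
  have hTaylor : ‖hessF x e - (gradF x - gradF xstar)‖ ≤ L / 2 * ‖e‖ ^ 2 := by
    have hrw : hessF x e - (gradF x - gradF xstar)
        = ∫ t in (0:ℝ)..1, (hessF x e - hessF (c t) e) := by
      rw [intervalIntegral.integral_sub (by
          apply ContinuousOn.intervalIntegrable
          exact continuousOn_const) hInt]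
      simp [hFTC]
    rw [hrw]
    have hbound : ∀ t ∈ Set.Icc (0:ℝ) 1,
        ‖hessF x e - hessF (c t) e‖ ≤ L * ‖e‖ ^ 2 * (1 - t) := by
      intro t ht
      have hx' : x ∈ segment ℝ xstar x := right_mem_segment ℝ xstar x
      have hop : ‖hessF x - hessF (c t)‖ ≤ L * ‖x - c t‖ :=
        hlip x hx' (c t) (hcseg t ht)
      have hxc : x - c t = (1 - t) • e := by
        simp [hc, he, sub_smul, one_smul]
        abel
      have hnorm : ‖x - c t‖ = (1 - t) * ‖e‖ := by
        rw [hxc, norm_smul, Real.norm_eq_abs, abs_of_nonneg (by linarith [ht.2])]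
      calc ‖hessF x e - hessF (c t) e‖ = ‖(hessF x - hessF (c t)) e‖ := by
            simp [ContinuousLinearMap.sub_apply]
        _ ≤ ‖hessF x - hessF (c t)‖ * ‖e‖ := (hessF x - hessF (c t)).le_opNorm e
        _ ≤ (L * ((1 - t) * ‖e‖)) * ‖e‖ := by
            rw [← hnorm]; exact mul_le_mul_of_nonneg_right hop (norm_nonneg e)
        _ = L * ‖e‖ ^ 2 * (1 - t) := by ring
    calc ‖∫ t in (0:ℝ)..1, (hessF x e - hessF (c t) e)‖
        ≤ ∫ t in (0:ℝ)..1, ‖hessF x e - hessF (c t) e‖ := by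
          apply intervalIntegral.norm_integral_le_integral_norm (by norm_num)
      _ ≤ ∫ t in (0:ℝ)..1, L * ‖e‖ ^ 2 * (1 - t) := by
          apply intervalIntegral.integral_mono_on (by norm_num)
          · exact (intervalIntegrable_const.sub hInt).norm
          · exact ((continuous_const.mul
              (continuous_const.sub continuous_id)).continuousOn).intervalIntegrable
          · exact hbound
      _ = L / 2 * ‖e‖ ^ 2 := by
          rw [intervalIntegral.integral_const_mul]
          have : (∫ t in (0:ℝ)..1, (1 - t)) = 1 / 2 := by
            rw [intervalIntegral.integral_sub intervalIntegrable_const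
              (intervalIntegral.intervalIntegrable_id)]
            simp
            norm_num
          rw [this]; ring
  -- combine the variational inequalities
  have hA : 0 ≤ ⟪gradF x + H (xplus - x), xstar - xplus⟫ := hVI xstar hxstarX
  have hB : 0 ≤ ⟪gradF xstar, xplus - xstar⟫ := hVIstar xplus hxplusX
  have hkey : μ * ‖d‖ ^ 2 ≤ ⟪H e - (gradF x - gradF xstar), d⟫ := by
    have h1 : μ * ‖d‖ ^ 2 ≤ ⟪d, H d⟫ := hHmin d
    have h2 : ⟪d, H d⟫ = ⟪H d, d⟫ := (hHsym d d).symm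
    have hdecomp : H d = H (xplus - x) + H e := by
      rw [← ContinuousLinearMap.map_add]
      congr 1
      simp [hd, he]
      try abel
    have h3 : ⟪H d, d⟫ = ⟪H (xplus - x), d⟫ + ⟪H e, d⟫ := by
      rw [hdecomp, inner_add_left]
    have h4 : ⟪H (xplus - x), d⟫ ≤ -⟪gradF x, d⟫ := by
      have : ⟪gradF x + H (xplus - x), xstar - xplus⟫
          = -⟪gradF x, d⟫ - ⟪H (xplus - x), d⟫ := by
        have hsx : xstar - xplus = -d := by simp [hd]
        rw [hsx, inner_add_left, inner_neg_right, inner_neg_right]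
        ring
      linarith [hA, this ▸ hA]
    have h5 : 0 ≤ ⟪gradF xstar, d⟫ := hB
    have h6 : ⟪H e - (gradF x - gradF xstar), d⟫
        = ⟪H e, d⟫ - ⟪gradF x, d⟫ + ⟪gradF xstar, d⟫ := by
      rw [inner_sub_left, inner_sub_left]; ring
    linarith [h1, h2 ▸ h1, h3, h4, h5]
  -- Cauchy–Schwarz and the operator bound
  have hCS : ⟪H e - (gradF x - gradF xstar), d⟫
      ≤ ‖H e - (gradF x - gradF xstar)‖ * ‖d‖ :=
    real_inner_le_norm _ _
  have hopbd : ‖H e - (gradF x - gradF xstar)‖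
      ≤ ‖H - hessF x‖ * ‖e‖ + L / 2 * ‖e‖ ^ 2 := by
    have hsplit : H e - (gradF x - gradF xstar)
        = (H - hessF x) e + (hessF x e - (gradF x - gradF xstar)) := by
      simp [ContinuousLinearMap.sub_apply]
      try abel
    calc ‖H e - (gradF x - gradF xstar)‖
        ≤ ‖(H - hessF x) e‖ + ‖hessF x e - (gradF x - gradF xstar)‖ := by
          rw [hsplit]; exact norm_add_le _ _
      _ ≤ ‖H - hessF x‖ * ‖e‖ + L / 2 * ‖e‖ ^ 2 :=
          add_le_add ((H - hessF x).le_opNorm e) hTaylor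
  -- finish
  have hfinal : μ * ‖d‖ ^ 2 ≤ (‖H - hessF x‖ * ‖e‖ + L / 2 * ‖e‖ ^ 2) * ‖d‖ := by
    calc μ * ‖d‖ ^ 2 ≤ ⟪H e - (gradF x - gradF xstar), d⟫ := hkey
      _ ≤ ‖H e - (gradF x - gradF xstar)‖ * ‖d‖ := hCS
      _ ≤ (‖H - hessF x‖ * ‖e‖ + L / 2 * ‖e‖ ^ 2) * ‖d‖ :=
          mul_le_mul_of_nonneg_right hopbd (norm_nonneg d)
  obtain ⟨A, hA⟩ : ∃ A : ℝ, ‖H - hessF x‖ = A := ⟨_, rfl⟩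
  have hA0 : 0 ≤ A := hA ▸ norm_nonneg _
  rw [hA] at hfinal ⊢
  have hxe : ‖x - xstar‖ = ‖e‖ := rfl
  have hxd : ‖xplus - xstar‖ = ‖d‖ := rfl
  rw [hxe, hxd]
  rcases eq_or_lt_of_le (norm_nonneg d) with hd0 | hd0
  · rw [← hd0]
    have h1 : 0 ≤ A / μ * ‖e‖ :=
      mul_nonneg (div_nonneg hA0 hμ.le) (norm_nonneg _)
    have h2 : 0 ≤ L / (2 * μ) * ‖e‖ ^ 2 :=
      mul_nonneg (div_nonneg hL (by linarith)) (sq_nonneg _)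
    linarith
  · have h1 : μ * ‖d‖ ≤ A * ‖e‖ + L / 2 * ‖e‖ ^ 2 := by
      have := mul_le_mul_of_nonneg_right hfinal (le_of_lt (inv_pos.mpr hd0))
      calc μ * ‖d‖ = μ * ‖d‖ ^ 2 * ‖d‖⁻¹ := by
            field_simp
        _ ≤ (A * ‖e‖ + L / 2 * ‖e‖ ^ 2) * ‖d‖ * ‖d‖⁻¹ := this
        _ = A * ‖e‖ + L / 2 * ‖e‖ ^ 2 := by
            field_simp
    have h3 : ‖d‖ ≤ (A * ‖e‖ + L / 2 * ‖e‖ ^ 2) / μ := by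
      rw [le_div_iff₀ hμ]
      linarith
    calc ‖d‖ ≤ (A * ‖e‖ + L / 2 * ‖e‖ ^ 2) / μ := h3
      _ = A / μ * ‖e‖ + L / (2 * μ) * ‖e‖ ^ 2 := by
          field_simp
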